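/- Identity principle on the anti-diagonal: let U ⊆ ℂ^n be a nonempty connected open set and let V = U* = {conj z : z ∈ U}. Let g : ℂ^n × ℂ^n → ℂ be holomorphic on U × V. If g(z, conj z) = 0 for every z ∈ U, then g vanishes identically on U × V. -/

import Mathlib

/-- Componentwise complex conjugation on `ℂ^n`. -/
def conjVec {n : ℕ} (z : Fin n → ℂ) : Fin n → ℂ := fun i => (starRingEnd ℂ) (z i)

open Complex Metric

-- the update map is analytic
lemma analyticAt_update {m : ℕ} (z : Fin m → ℂ) (k : Fin m) (w : ℂ) :
    AnalyticAt ℂ (fun w : ℂ => Function.update z k w) w := by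
  have heq : (fun w : ℂ => Function.update z k w)
      = fun w : ℂ => (ContinuousLinearMap.toSpanSingleton ℂ ((Pi.single k 1 : Fin m → ℂ))) w
        + (z - z k • (Pi.single k 1 : Fin m → ℂ)) := by
    funext w
    funext i
    simp [Function.update_apply, Pi.single_apply, ContinuousLinearMap.toSpanSingleton_apply]
    by_cases h : i = k <;> simp [h]
  rw [heq]
  exact ((ContinuousLinearMap.toSpanSingleton ℂ _).analyticAt w).add analyticAt_const

/-- Lemma A: analytic function on a polydisc centered at a real point, vanishing on the
real points, vanishes. -/
lemma vanish_of_vanish_real {m : ℕ} (f : (Fin m → ℂ) → ℂ) (c : Fin m → ℂ) (r : ℝ)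
    (hc : ∀ i, (c i).im = 0)
    (hf : AnalyticOnNhd ℂ f (ball c r))
    (h0 : ∀ q ∈ ball c r, (∀ i, (q i).im = 0) → f q = 0) :
    ∀ q ∈ ball c r, f q = 0 := by
  have key : ∀ k : ℕ, ∀ q ∈ ball c r, (∀ i : Fin m, k ≤ i.val → (q i).im = 0) → f q = 0 := by
    intro k
    induction k with
    | zero => exact fun q hq h => h0 q hq fun i => h i (Nat.zero_le _)
    | succ k ih =>
      intro z hz hreal
      have hr : 0 < r := pos_of_mem_ball hz
      by_cases hk : k < m
      · set K : Fin m := ⟨k, hk⟩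
        -- the slice function
        set φ : ℂ → ℂ := fun w => f (Function.update z K w) with hφ
        have hmem : ∀ w : ℂ, w ∈ ball (c K) r → Function.update z K w ∈ ball c r := by
          intro w hw
          rw [mem_ball, dist_pi_lt_iff hr]
          intro i
          by_cases h : i = K
          · subst h; simpa using hw
          · simp only [Function.update_apply, h, if_false]
            exact (dist_pi_lt_iff hr).1 hz i
        have hφa : AnalyticOnNhd ℂ φ (ball (c K) r) := by
          intro w hw
          exact (hf _ (hmem w hw)).comp (analyticAt_update z K w)
        have hφ0 : ∀ w : ℂ, w ∈ ball (c K) r → w.im = 0 → φ w = 0 := by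
          intro w hw hwre
          apply ih _ (hmem w hw)
          intro i hi
          rcases eq_or_ne i K with h | h
          · subst h; simpa using hwre
          · rw [Function.update_apply]
            simp only [h, if_false]
            apply hreal
            rcases Nat.lt_or_ge i.val (k+1) with h' | h'
            · exfalso; exact h (Fin.ext (Nat.le_antisymm (Nat.lt_succ_iff.1 h') hi))
            · exact h'
          
        have hcK : c K ∈ ball (c K) r := mem_ball_self hr
        have hfreq : ∃ᶠ w in nhdsWithin (c K) {(c K)}ᶜ, φ w = 0 := by
          have htend : Filter.Tendsto (fun j : ℕ => c K + ((r/2)/(j+1) : ℝ))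
              Filter.atTop (nhdsWithin (c K) {(c K)}ᶜ) := by
            rw [tendsto_nhdsWithin_iff]
            constructor
            · have hre : Filter.Tendsto (fun j : ℕ => ((r/2)/(j+1) : ℝ)) Filter.atTop (nhds 0) := by
                have := tendsto_one_div_add_atTop_nhds_zero_nat.const_mul (r/2)
                simpa [mul_one_div, div_eq_mul_inv] using this
              have hco : Filter.Tendsto (fun j : ℕ => (((r/2)/(j+1) : ℝ) : ℂ)) Filter.atTop
                  (nhds (0:ℂ)) := by
                have := (Complex.continuous_ofReal.tendsto 0).comp hre
                simpa [Function.comp_def] using this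
              have := (tendsto_const_nhds (x := c K) (f := Filter.atTop (α := ℕ))).add hco
              simpa using this
            · filter_upwards with j
              simp only [Set.mem_compl_iff, Set.mem_singleton_iff, add_eq_left]
              intro hcontra
              have : ((r/2)/(j+1) : ℝ) = 0 := by exact_mod_cast hcontra
              have : (0:ℝ) < (r/2)/(j+1) := by positivity
              linarith
          apply htend.frequently
          apply Filter.Frequently.of_forall
          intro j
          apply hφ0
          · rw [mem_ball]
            have h1 : (0:ℝ) < (r/2)/(j+1) := by positivity
            have h2 : ((r/2)/(j+1):ℝ) < r := by
              have : ((r/2)/(j+1):ℝ) ≤ r/2 := by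
                apply div_le_self (le_of_lt (by positivity))
                have := Nat.cast_nonneg (α := ℝ) j
                linarith
              linarith
            calc dist (c K + ((r/2)/(j+1) : ℝ)) (c K) = ‖(((r/2)/(j+1) : ℝ):ℂ)‖ := by
                  rw [dist_eq, add_sub_cancel_left]
              _ = |((r/2)/(j+1) : ℝ)| := by rw [Complex.norm_real, Real.norm_eq_abs]
              _ < r := by rw [abs_of_pos h1]; exact h2
          · simp only [Complex.add_im, hc K, Complex.ofReal_im, zero_add]
        have := hφa.eqOn_zero_of_preconnected_of_frequently_eq_zero
          (convex_ball (c K) r).isPreconnected hcK hfreq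
        have hzK : z K ∈ ball (c K) r := by
          rw [mem_ball]; exact (dist_pi_lt_iff hr).1 hz K
        have := this hzK
        simpa [hφ, Function.update_eq_self] using this
      · exact ih z hz fun i hi => absurd (lt_of_le_of_lt hi i.isLt) (by omega)
  intro q hq
  exact key m q hq fun i hi => absurd (lt_of_le_of_lt (le_refl _) i.isLt) (by omega)



section main
variable (n : ℕ)

noncomputable def Amap : (Fin (n+n) → ℂ) →L[ℂ] (Fin n → ℂ) :=
  ContinuousLinearMap.pi fun i =>
    ContinuousLinearMap.proj (Fin.castAdd n i) + Complex.I • ContinuousLinearMap.proj (Fin.natAdd n i)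

noncomputable def Bmap : (Fin (n+n) → ℂ) →L[ℂ] (Fin n → ℂ) :=
  ContinuousLinearMap.pi fun i =>
    ContinuousLinearMap.proj (Fin.castAdd n i) - Complex.I • ContinuousLinearMap.proj (Fin.natAdd n i)

noncomputable def Phi : (Fin (n+n) → ℂ) →L[ℂ] (Fin n → ℂ) × (Fin n → ℂ) :=
  (Amap n).prod (Bmap n)

noncomputable def Psi (x : (Fin n → ℂ) × (Fin n → ℂ)) : Fin (n+n) → ℂ :=
  Fin.addCases (fun i => (x.1 i + x.2 i)/2) (fun i => (x.1 i - x.2 i)/(2*Complex.I))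

lemma Phi_apply (q : Fin (n+n) → ℂ) :
    Phi n q = (fun i => q (Fin.castAdd n i) + Complex.I * q (Fin.natAdd n i),
               fun i => q (Fin.castAdd n i) - Complex.I * q (Fin.natAdd n i)) := by
  rfl

lemma Phi_Psi (x : (Fin n → ℂ) × (Fin n → ℂ)) : Phi n (Psi n x) = x := by
  rw [Phi_apply]
  apply Prod.ext <;> funext i <;>
    simp only [Psi, Fin.addCases_left, Fin.addCases_right]
  · field_simp; ring
  · field_simp; ring

lemma Psi_Phi (q : Fin (n+n) → ℂ) : Psi n (Phi n q) = q := by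
  funext j
  induction j using Fin.addCases with
  | left i =>
    simp only [Psi, Phi_apply, Fin.addCases_left]
    ring
  | right i =>
    simp only [Psi, Phi_apply, Fin.addCases_right]
    have h := Complex.I_ne_zero
    field_simp
    ring

lemma Psi_continuous : Continuous (Psi n) := by
  apply continuous_pi
  intro j
  induction j using Fin.addCases with
  | left i =>
    simp only [Psi, Fin.addCases_left]
    fun_prop
  | right i =>
    simp only [Psi, Fin.addCases_right]
    fun_prop
end main

lemma conjVec_continuous {n : ℕ} : Continuous (conjVec (n := n)) :=
  continuous_pi fun i => Complex.continuous_conj.comp (continuous_apply i)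


/-- Identity principle on the anti-diagonal: if `U ⊆ ℂ^n` is a nonempty connected open set,
`V = U*` its mirror, `g` is holomorphic on `U × V` and `g (z, conj z) = 0` for every `z ∈ U`,
then `g` vanishes identically on `U × V`. -/
theorem vanish_on_antidiagonal (n : ℕ) (U : Set (Fin n → ℂ)) (hU : IsOpen U)
    (hconn : IsConnected U)
    (g : (Fin n → ℂ) × (Fin n → ℂ) → ℂ)
    (hg : AnalyticOnNhd ℂ g (U ×ˢ (conjVec '' U)))
    (hz : ∀ z ∈ U, g (z, conjVec z) = 0) :
    ∀ x ∈ U ×ˢ (conjVec '' U), g x = 0 := by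
  set S := U ×ˢ (conjVec '' U) with hS
  -- S is open
  have hVopen : IsOpen (conjVec '' U) := by
    have himg : conjVec '' U = conjVec ⁻¹' U := by
      ext x
      constructor
      · rintro ⟨z, hzU, rfl⟩
        have hcc : conjVec (conjVec z) = z := by funext i; simp [conjVec]
        simpa [Set.mem_preimage, hcc] using hzU
      · intro hx
        exact ⟨conjVec x, hx, by funext i; simp [conjVec]⟩
    rw [himg]
    exact hU.preimage conjVec_continuous
  have hSopen : IsOpen S := hU.prod hVopen
  have hSpre : IsPreconnected S :=
    (hconn.prod (hconn.image conjVec conjVec_continuous.continuousOn)).isPreconnected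
  obtain ⟨z₀, hz₀⟩ := hconn.nonempty
  -- base point in real coordinates
  set q₀ : Fin (n+n) → ℂ :=
    Fin.addCases (fun i => ((z₀ i).re : ℂ)) (fun i => ((z₀ i).im : ℂ)) with hq₀def
  have hq₀real : ∀ j, (q₀ j).im = 0 := by
    intro j
    induction j using Fin.addCases with
    | left i => simp [hq₀def, Fin.addCases_left]
    | right i =>
      simp only [hq₀def]
      erw [Fin.addCases_right]
      simp
  have hPhiq₀ : Phi n q₀ = (z₀, conjVec z₀) := by
    rw [Phi_apply]
    apply Prod.ext <;> funext i <;>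
      simp only [hq₀def, Fin.addCases_left, Fin.addCases_right]
    · apply Complex.ext <;> simp
    · show _ = conjVec z₀ i
      unfold conjVec
      apply Complex.ext <;> simp
  have hq₀S : Phi n q₀ ∈ S := by
    rw [hPhiq₀]
    exact ⟨hz₀, ⟨z₀, hz₀, rfl⟩⟩
  -- choose a polydisc around q₀ mapped into S
  obtain ⟨r, hr, hball⟩ := Metric.isOpen_iff.1 (hSopen.preimage (Phi n).continuous) q₀ hq₀S
  -- the pulled-back function vanishes on the polydisc
  have hkey : ∀ q ∈ ball q₀ r, g (Phi n q) = 0 := by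
    apply vanish_of_vanish_real _ _ _ hq₀real
    · intro q hq
      exact ((hg _ (hball hq)).comp ((Phi n).analyticAt q))
    · intro q hq hqreal
      have hqS : Phi n q ∈ S := hball hq
      have hsnd : (Phi n q).2 = conjVec (Phi n q).1 := by
        rw [Phi_apply]
        funext i
        unfold conjVec
        simp only [map_add, map_mul, Complex.conj_I]
        rw [Complex.conj_eq_iff_im.2 (hqreal _), Complex.conj_eq_iff_im.2 (hqreal _)]
        ring
      have h1 : (Phi n q).1 ∈ U := hqS.1
      calc g (Phi n q) = g ((Phi n q).1, conjVec (Phi n q).1) := by rw [← hsnd]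
        _ = 0 := hz _ h1
  -- transfer to a neighborhood of (z₀, conjVec z₀)
  have hΨc : Continuous (Psi n) := Psi_continuous n
  obtain ⟨δ, hδ, hδball⟩ := Metric.continuous_iff.1 hΨc (Phi n q₀) r hr
  have hev : g =ᶠ[nhds (Phi n q₀)] 0 := by
    filter_upwards [Metric.ball_mem_nhds (Phi n q₀) hδ] with x hx
    have h1 : Psi n x ∈ ball q₀ r := by
      rw [mem_ball, ← Psi_Phi n q₀]
      exact hδball x hx
    have := hkey _ h1
    rwa [Phi_Psi] at this
  have := hg.eqOn_zero_of_preconnected_of_eventuallyEq_zero hSpre hq₀S hev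
  intro x hx
  exact this hx
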